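/- Let N be a positive integer, p a prime not dividing N, (k₁,…,k_r) a tuple of positive integers of weight k = k₁+⋯+k_r, and α₁,…,α_r integers. Then in ZMod p one has Σ_{0 < m₁ < ⋯ < m_r < p, m_i ≡ α_i (mod N) for all i} 1/(m₁^{k₁}⋯m_r^{k_r}) = (−1)^k · Σ_{0 < n₁ < ⋯ < n_r < p, n_i ≡ p − α_{r+1−i} (mod N) for all i} 1/(n₁^{k_r}⋯n_r^{k_1}), i.e. the reversed index (k_r,…,k_1) appears on the right, with the i-th variable carrying exponent k_{r+1−i}. -/

import Mathlib

open Finset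

open scoped Classical

/-- **Proposition 2.4 i) (reversal formula), prime-by-prime.** For a prime `p` not dividing `N`,
an index `(k₁,…,k_r)` of weight `k`, and integers `α₁,…,α_r`, the sum of
`1/(m₁^{k₁}⋯m_r^{k_r})` over `0 < m₁ < ⋯ < m_r < p` with `m_i ≡ α_i (mod N)` equals
`(-1)^k` times the sum over `0 < n₁ < ⋯ < n_r < p` with `n_i ≡ p - α_{r+1-i} (mod N)` of
`1/(n₁^{k_r}⋯n_r^{k_1})`, as elements of `ZMod p`. -/
theorem reversal (N p : ℕ) (hN : 0 < N) (hp : p.Prime) (hpN : ¬ p ∣ N)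
    (r : ℕ) (k : Fin r → ℕ) (hk : ∀ i, 0 < k i) (α : Fin r → ℤ) :
    (∑ m ∈ (Fintype.piFinset fun _ : Fin r => Finset.Ioo 0 p).filter
        (fun m : Fin r → ℕ => StrictMono m ∧ ∀ i, ((m i : ZMod N) = ((α i : ℤ) : ZMod N))),
      ∏ i, ((m i : ZMod p) ^ k i)⁻¹)
    = (-1) ^ (∑ i, k i) *
      ∑ n ∈ (Fintype.piFinset fun _ : Fin r => Finset.Ioo 0 p).filter
        (fun n : Fin r → ℕ => StrictMono n ∧
          ∀ i, ((n i : ZMod N) = (p : ZMod N) - ((α i.rev : ℤ) : ZMod N))),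
      ∏ i, ((n i : ZMod p) ^ k i.rev)⁻¹ := by
  haveI : Fact p.Prime := ⟨hp⟩
  have key :
      (∑ n ∈ (Fintype.piFinset fun _ : Fin r => Finset.Ioo 0 p).filter
        (fun n : Fin r → ℕ => StrictMono n ∧
          ∀ i, ((n i : ZMod N) = (p : ZMod N) - ((α i.rev : ℤ) : ZMod N))),
        ∏ i, ((n i : ZMod p) ^ k i.rev)⁻¹)
      = (-1 : ZMod p) ^ (∑ i, k i) *
        ∑ m ∈ (Fintype.piFinset fun _ : Fin r => Finset.Ioo 0 p).filter
          (fun m : Fin r → ℕ => StrictMono m ∧ ∀ i, ((m i : ZMod N) = ((α i : ℤ) : ZMod N))),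
        ∏ i, ((m i : ZMod p) ^ k i)⁻¹ := by
    rw [Finset.mul_sum]
    refine Finset.sum_nbij' (i := fun n => fun j : Fin r => p - n j.rev)
      (j := fun m => fun j : Fin r => p - m j.rev) ?_ ?_ ?_ ?_ ?_
    · -- maps T into S
      intro n hn
      simp only [Finset.mem_filter, Fintype.mem_piFinset, Finset.mem_Ioo] at hn ⊢
      obtain ⟨hIoo, hmono, hcong⟩ := hn
      refine ⟨fun i => ?_, fun a b hab => ?_, fun i => ?_⟩
      · have h1 := hIoo i.rev; omega
      · have h1 := hIoo a.rev
        have h2 := hIoo b.rev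
        have h3 : b.rev < a.rev := Fin.rev_lt_rev.mpr hab
        have := hmono h3
        show p - n a.rev < p - n b.rev
        omega
      · have h1 := hIoo i.rev
        show ((p - n i.rev : ℕ) : ZMod N) = _
        rw [Nat.cast_sub h1.2.le]
        have := hcong i.rev
        rw [Fin.rev_rev] at this
        rw [this]
        ring
    · -- maps S into T
      intro m hm
      simp only [Finset.mem_filter, Fintype.mem_piFinset, Finset.mem_Ioo] at hm ⊢
      obtain ⟨hIoo, hmono, hcong⟩ := hm
      refine ⟨fun i => ?_, fun a b hab => ?_, fun i => ?_⟩
      · have h1 := hIoo i.rev; omega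
      · have h1 := hIoo a.rev
        have h2 := hIoo b.rev
        have h3 : b.rev < a.rev := Fin.rev_lt_rev.mpr hab
        have := hmono h3
        show p - m a.rev < p - m b.rev
        omega
      · have h1 := hIoo i.rev
        show ((p - m i.rev : ℕ) : ZMod N) = _
        rw [Nat.cast_sub h1.2.le, hcong i.rev]
    · intro n hn
      simp only [Finset.mem_filter, Fintype.mem_piFinset, Finset.mem_Ioo] at hn
      funext j
      have h1 := hn.1 j
      simp only [Fin.rev_rev]
      omega
    · intro m hm
      simp only [Finset.mem_filter, Fintype.mem_piFinset, Finset.mem_Ioo] at hm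
      funext j
      have h1 := hm.1 j
      simp only [Fin.rev_rev]
      omega
    · -- value equation
      intro n hn
      simp only [Finset.mem_filter, Fintype.mem_piFinset, Finset.mem_Ioo] at hn
      obtain ⟨hIoo, hmono, hcong⟩ := hn
      have hcast : ∀ j : Fin r, (((p - n j.rev : ℕ) : ZMod p)) = - (n j.rev : ZMod p) := by
        intro j
        have h1 := hIoo j.rev
        rw [Nat.cast_sub h1.2.le, ZMod.natCast_self]
        ring
      calc ∏ i, ((n i : ZMod p) ^ k i.rev)⁻¹
          = ∏ j, ((n j.rev : ZMod p) ^ k j)⁻¹ := by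
            rw [← Equiv.prod_comp (Fin.revPerm) (fun j => ((n j.rev : ZMod p) ^ k j)⁻¹)]
            simp [Fin.rev_rev]
        _ = ∏ j, ((-1 : ZMod p) ^ k j * (((p - n j.rev : ℕ) : ZMod p) ^ k j)⁻¹) := by
            refine Finset.prod_congr rfl fun j _ => ?_
            have h2 : ((-(n j.rev : ZMod p)) ^ k j)⁻¹
                = (-1 : ZMod p) ^ k j * ((n j.rev : ZMod p) ^ k j)⁻¹ := by
              rw [neg_pow, mul_inv, ← inv_pow, inv_neg, inv_one]
            rw [hcast j, h2, ← mul_assoc, ← pow_add, Even.neg_one_pow ⟨k j, rfl⟩, one_mul]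
        _ = (-1 : ZMod p) ^ (∑ i, k i) * ∏ j, (((p - n j.rev : ℕ) : ZMod p) ^ k j)⁻¹ := by
            rw [Finset.prod_mul_distrib, Finset.prod_pow_eq_pow_sum]
  rw [key, ← mul_assoc, ← pow_add]
  rw [Even.neg_one_pow ⟨∑ i, k i, rfl⟩, one_mul]
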